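/- arXiv:0705.2956 — 3 statements merged into one kernel-verified Lean document; each statement's English description precedes it below -/
import Mathlib

section
/- Let G be a group acting on sets M and Ω, let K ≤ G be a subgroup, let Φ : M → Ω be a G-equivariant map, and let D ⊆ Ω be a subset satisfying: (i) Φ(M) ⊆ G • D; (ii) for all ξ, ξ' ∈ D and g ∈ G, g • ξ = ξ' implies ξ = ξ'; (iii) for every ξ ∈ D the stabilizer G_ξ = {g ∈ G : g • ξ = ξ} is contained in K. Define N := Φ⁻¹(K • D). Then: (a) for every m ∈ M there exist g ∈ G and n ∈ N with m = g • n; and (b) whenever g • n = g' • n' with g, g' ∈ G and n, n' ∈ N, the element k := g'⁻¹ g lies in K, and one has g' = g k⁻¹ and n' = k • n. -/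
/-- Set-theoretic core of Proposition 2.12: with `D` a fundamental-domain-like subset of `Ω`
whose stabilizers lie in `K`, and `Φ : M → Ω` an equivariant map with image in `G • D`,
every point of `M` is of the form `g • n` with `n ∈ N := Φ⁻¹(K • D)`, and such a
representation is unique up to an element of `K`. -/
theorem induction_of_cross_section_bijective
    {G M Ω : Type*} [Group G] [MulAction G M] [MulAction G Ω]
    (K : Subgroup G) (Φ : M → Ω)
    (hΦ : ∀ (g : G) (m : M), Φ (g • m) = g • Φ m)
    (D : Set Ω)
    (h1 : ∀ m : M, ∃ g : G, ∃ d ∈ D, Φ m = g • d)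
    (h2 : ∀ ξ ∈ D, ∀ ξ' ∈ D, ∀ g : G, g • ξ = ξ' → ξ = ξ')
    (h3 : ∀ ξ ∈ D, ∀ g : G, g • ξ = ξ → g ∈ K)
    (N : Set M) (hN : N = {m : M | ∃ k ∈ K, ∃ d ∈ D, Φ m = k • d}) :
    (∀ m : M, ∃ g : G, ∃ n ∈ N, m = g • n) ∧
    (∀ g g' : G, ∀ n n' : M, n ∈ N → n' ∈ N → g • n = g' • n' →
      g'⁻¹ * g ∈ K ∧ g' = g * (g'⁻¹ * g)⁻¹ ∧ n' = (g'⁻¹ * g) • n) := by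
  subst hN
  constructor
  · intro m
    obtain ⟨g, d, hd, hm⟩ := h1 m
    refine ⟨g, g⁻¹ • m, ⟨1, one_mem _, d, hd, ?_⟩, by simp⟩
    rw [hΦ, hm, one_smul, inv_smul_smul]
  · intro g g' n n' hn hn' heq
    obtain ⟨k, hk, d, hd, hΦn⟩ := hn
    obtain ⟨k', hk', d', hd', hΦn'⟩ := hn'
    have key : (k'⁻¹ * g'⁻¹ * g * k) • d = d' := by
      have := congrArg Φ heq
      rw [hΦ, hΦ, hΦn, hΦn'] at this
      simp only [mul_smul]
      rw [this]
      simp [smul_smul]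
    have hdd : d = d' := h2 d hd d' hd' _ key
    have hstab : k'⁻¹ * g'⁻¹ * g * k ∈ K := h3 d hd _ (hdd ▸ key)
    have hK : g'⁻¹ * g ∈ K := by
      have : g'⁻¹ * g = k' * (k'⁻¹ * g'⁻¹ * g * k) * k⁻¹ := by group
      rw [this]
      exact K.mul_mem (K.mul_mem hk' hstab) (K.inv_mem hk)
    refine ⟨hK, by group, ?_⟩
    rw [← smul_smul, heq, inv_smul_smul]
end

section
/- Let g be a finite-dimensional Lie algebra over a field, let V be a vector space over the same field equipped with a bilinear form ω, let ρ : g → V and Φ' : V → g* be linear maps, and let ξ ∈ g*. Assume: (a) Φ'(v)(X) = ω(ρ(X), v) for all v ∈ V and X ∈ g; and (b) Φ'(ρ(X))(Y) = ξ([X, Y]) for all X, Y ∈ g. Set g_ξ := {X ∈ g : ξ([X, Y]) = 0 for all Y ∈ g} and g_m := ker ρ. Then (g_ξ)⁰ ⊆ range(Φ') ⊆ (g_m)⁰, where S⁰ := {η ∈ g* : η(X) = 0 for all X ∈ S} denotes the annihilator in g*. -/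
/-- Lemma 2.8 (lem incl): for a momentum-map-like pair `(ρ, Φ')` at a point with value `ξ`,
the image of the tangent map `Φ'` is squeezed between the annihilator of the coadjoint
stabilizer `L_ξ` and the annihilator of the infinitesimal stabilizer `L_m = ker ρ`. -/
theorem momentum_map_tangent_image_inclusions
    {F L V : Type*} [Field F] [LieRing L] [LieAlgebra F L] [FiniteDimensional F L]
    [AddCommGroup V] [Module F V]
    (ω : V →ₗ[F] V →ₗ[F] F)
    (ρ : L →ₗ[F] V) (Φ' : V →ₗ[F] Module.Dual F L)
    (ξ : Module.Dual F L)
    (ha : ∀ (v : V) (X : L), Φ' v X = ω (ρ X) v)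
    (hb : ∀ X Y : L, Φ' (ρ X) Y = ξ ⁅X, Y⁆) :
    {η : Module.Dual F L | ∀ X : L, (∀ Y : L, ξ ⁅X, Y⁆ = 0) → η X = 0} ⊆ Set.range Φ' ∧
    Set.range Φ' ⊆ {η : Module.Dual F L | ∀ X : L, ρ X = 0 → η X = 0} := by
  set T : L →ₗ[F] Module.Dual F L := Φ'.comp ρ with hT
  have hTapp : ∀ X Y : L, T X Y = ξ ⁅X, Y⁆ := fun X Y => hb X Y
  have hskew : ∀ X Y : L, T X Y = -(T Y X) := by
    intro X Y
    rw [hTapp, hTapp, ← lie_skew, map_neg]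
  have hTd : T = -(T.dualMap.comp (Module.Dual.eval F L)) := by
    ext X Y
    simp only [LinearMap.neg_apply, LinearMap.comp_apply, LinearMap.dualMap_apply,
      Module.Dual.eval_apply]
    rw [hskew X Y]
  have heval : Function.Surjective (Module.Dual.eval F L) :=
    (Module.evalEquiv F L).surjective
  have hrange : LinearMap.range T = LinearMap.range T.dualMap := by
    conv_lhs => rw [hTd]
    ext η
    constructor
    · rintro ⟨x, rfl⟩
      exact ⟨-(Module.Dual.eval F L x), by simp⟩
    · rintro ⟨φ, rfl⟩
      obtain ⟨x, rfl⟩ := heval φ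
      exact ⟨-x, by simp⟩
  have hker : ∀ X : L, X ∈ LinearMap.ker T ↔ ∀ Y, ξ ⁅X, Y⁆ = 0 := by
    intro X
    simp only [LinearMap.mem_ker]
    constructor
    · intro h Y
      rw [← hTapp, h]; rfl
    · intro h
      ext Y
      rw [hTapp, h]; rfl
  constructor
  · intro η hη
    have hmem : η ∈ (LinearMap.ker T).dualAnnihilator := by
      rw [Submodule.mem_dualAnnihilator]
      intro w hw
      exact hη w ((hker w).mp hw)
    rw [← LinearMap.range_dualMap_eq_dualAnnihilator_ker, ← hrange] at hmem
    obtain ⟨X, rfl⟩ := hmem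
    exact ⟨ρ X, rfl⟩
  · rintro η ⟨v, rfl⟩ X hX
    rw [ha, hX, map_zero, LinearMap.zero_apply]
end

section
/- Let g be a Lie algebra over a field with an internal direct sum decomposition g = k ⊕ p, where k is a Lie subalgebra and [k, p] ⊆ p. Let ξ ∈ g* vanish on p, set g_ξ := {X ∈ g : ξ([X, Y]) = 0 for all Y ∈ g}, and assume g_ξ ∩ p = {0}. Let V be a vector space over the same field with a bilinear form ω, and let ρ : g → V and Φ' : V → g* be linear maps satisfying (a) Φ'(v)(X) = ω(ρ(X), v) for all v ∈ V, X ∈ g, and (b) Φ'(ρ(X))(Y) = ξ([X, Y]) for all X, Y ∈ g. Let p⁰ := {η ∈ g* : η(p) = 0} and W := (Φ')⁻¹(p⁰) ⊆ V. Then: (i) W ∩ ρ(p) = {0}; (ii) ω(ρ(X), w) = 0 for all X ∈ p and w ∈ W; and (iii) if moreover ω is alternating and nondegenerate on V and V = W + ρ(p), then the restrictions of ω to W and to ρ(p) are nondegenerate. -/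
/-- Linear-algebraic content of Proposition 2.5 (the Hamiltonian cross-section theorem):
with `L = k ⊕ p` a direct sum, `[k, p] ⊆ p`, `ξ` vanishing on `p` with coadjoint stabilizer
meeting `p` trivially, and `(ρ, Φ')` a momentum-map-like pair with value `ξ`, the subspace
`W = Φ'⁻¹(p⁰)` satisfies: (i) `W ∩ ρ(p) = {0}`; (ii) `W` and `ρ(p)` are symplectically
orthogonal; (iii) if moreover `ω` is alternating and nondegenerate and `V = W + ρ(p)`, then
the restrictions of `ω` to `W` and to `ρ(p)` are nondegenerate. -/
theorem hamiltonian_cross_section_linear_algebra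
    {F L V : Type*} [Field F] [LieRing L] [LieAlgebra F L]
    [AddCommGroup V] [Module F V]
    (k : LieSubalgebra F L) (p : Submodule F L)
    (hsum : k.toSubmodule ⊔ p = ⊤) (hinf : k.toSubmodule ⊓ p = ⊥)
    (hkp : ∀ X ∈ k, ∀ Y ∈ p, ⁅X, Y⁆ ∈ p)
    (ξ : Module.Dual F L) (hξ : ∀ Y ∈ p, ξ Y = 0)
    (hstab : ∀ X ∈ p, (∀ Y : L, ξ ⁅X, Y⁆ = 0) → X = 0)
    (ω : V →ₗ[F] V →ₗ[F] F)
    (ρ : L →ₗ[F] V) (Φ' : V →ₗ[F] Module.Dual F L)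
    (ha : ∀ (v : V) (X : L), Φ' v X = ω (ρ X) v)
    (hb : ∀ X Y : L, Φ' (ρ X) Y = ξ ⁅X, Y⁆)
    (W : Set V) (hW : W = {v : V | ∀ X ∈ p, Φ' v X = 0}) :
    (∀ X ∈ p, ρ X ∈ W → ρ X = 0) ∧
    (∀ X ∈ p, ∀ w ∈ W, ω (ρ X) w = 0) ∧
    ((∀ v : V, ω v v = 0) → (∀ v : V, (∀ u : V, ω v u = 0) → v = 0) →
      (∀ v : V, ∃ w ∈ W, ∃ X ∈ p, v = w + ρ X) →
      ((∀ w ∈ W, (∀ w' ∈ W, ω w w' = 0) → w = 0) ∧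
       (∀ X ∈ p, (∀ Y ∈ p, ω (ρ X) (ρ Y) = 0) → ρ X = 0))) := by
  subst hW
  -- (ii) first
  have h2 : ∀ X ∈ p, ∀ w ∈ {v : V | ∀ X ∈ p, Φ' v X = 0}, ω (ρ X) w = 0 := by
    intro X hX w hw
    rw [← ha]
    exact hw X hX
  have h1 : ∀ X ∈ p, ρ X ∈ {v : V | ∀ X ∈ p, Φ' v X = 0} → ρ X = 0 := by
    intro X hX hmem
    have hX0 : X = 0 := by
      apply hstab X hX
      intro Y
      obtain ⟨yk, hyk, yp, hyp, hy⟩ := Submodule.mem_sup.mp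
        (by rw [hsum]; trivial : Y ∈ k.toSubmodule ⊔ p)
      have e1 : ξ ⁅X, yp⁆ = 0 := by rw [← hb]; exact hmem yp hyp
      have e2 : ξ ⁅X, yk⁆ = 0 := by
        have : ⁅X, yk⁆ = -⁅yk, X⁆ := by rw [lie_skew]
        rw [this, map_neg, hξ _ (hkp yk hyk X hX), neg_zero]
      calc ξ ⁅X, Y⁆ = ξ ⁅X, yk + yp⁆ := by rw [hy]
        _ = ξ ⁅X, yk⁆ + ξ ⁅X, yp⁆ := by rw [lie_add, map_add]
        _ = 0 := by rw [e1, e2, add_zero]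
    rw [hX0, map_zero]
  refine ⟨h1, h2, ?_⟩
  intro halt hnd hdecomp
  have hskew : ∀ a b : V, ω a b = -ω b a := by
    intro a b
    have := halt (a + b)
    simp only [map_add, LinearMap.add_apply, halt a, halt b] at this
    linear_combination this
  constructor
  · intro w hw hperp
    apply hnd
    intro u
    obtain ⟨w', hw', X, hX, hu⟩ := hdecomp u
    rw [hu, map_add]
    rw [hperp w' hw', hskew w (ρ X), h2 X hX w hw, neg_zero, add_zero]
  · intro X hX hperp
    apply hnd
    intro u
    obtain ⟨w', hw', Y, hY, hu⟩ := hdecomp u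
    rw [hu, map_add, hperp Y hY, h2 X hX w' hw', add_zero]
end
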